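/- arXiv:2410.18414 — 2 statements merged into one kernel-verified Lean document; each statement's English description precedes it below -/
import Mathlib

section
/- Semi-discrete Gauss's law for BDF methods: suppose (1/(c²Δt²)) Σ_{i=n-k}^{n} a_{n-i} Σ_{j=i-k}^{i} a_{i-j} φ^j - Δφ^n = ρ^n/ε₀ (the wave equation for φ), and the gauge condition (1/(c²Δt)) Σ_{i=n-k}^{n} a_{n-i} φ^i + div A^n = 0 holds for all time levels n. Define E^n = -∇φ^n - (1/Δt) Σ_{i=n-k}^{n} a_{n-i} A^i. Then div E^n = ρ^n/ε₀. -/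
open Finset

/-- Semi-discrete Gauss's law for BDF-k methods: if the BDF wave equation for `φ`
holds at level `n` and the semi-discrete gauge condition holds at every level,
then the semi-discrete electric field satisfies `div E^n = ρ^n / ε₀`. -/
theorem bdf_gauss_law
    {S V : Type*} [AddCommGroup S] [Module ℝ S] [AddCommGroup V] [Module ℝ V]
    (grad : S →ₗ[ℝ] V) (dvg : V →ₗ[ℝ] S) (lap : S →ₗ[ℝ] S)
    (hdivgrad : ∀ ψ : S, dvg (grad ψ) = lap ψ)
    (c Δt ε₀ : ℝ) (hc : 0 < c) (hΔt : 0 < Δt) (hε₀ : 0 < ε₀)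
    (k : ℤ) (hk : 1 ≤ k) (a : ℤ → ℝ)
    (φ ρ : ℤ → S) (A : ℤ → V) (E : V) (n : ℤ)
    (hwave : (1 / (c ^ 2 * Δt ^ 2)) •
        (∑ i ∈ Finset.Icc (n - k) n, a (n - i) •
          ∑ j ∈ Finset.Icc (i - k) i, a (i - j) • φ j)
        - lap (φ n) = (1 / ε₀) • ρ n)
    (hgauge : ∀ m : ℤ,
      (1 / (c ^ 2 * Δt)) • (∑ i ∈ Finset.Icc (m - k) m, a (m - i) • φ i)
        + dvg (A m) = 0)
    (hE : E = -grad (φ n)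
        - (1 / Δt) • ∑ i ∈ Finset.Icc (n - k) n, a (n - i) • A i) :
    dvg E = (1 / ε₀) • ρ n := by
  have hdvg : ∀ m : ℤ, dvg (A m)
      = -((1 / (c ^ 2 * Δt)) • (∑ i ∈ Finset.Icc (m - k) m, a (m - i) • φ i)) := by
    intro m
    exact eq_neg_of_add_eq_zero_right (hgauge m)
  rw [hE, map_sub, map_neg, map_smul, map_sum, hdivgrad]
  simp only [map_smul, hdvg]
  rw [← hwave]
  have hcne : c ^ 2 * Δt ≠ 0 := by positivity
  have : (∑ i ∈ Finset.Icc (n - k) n, a (n - i) •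
      -((1 / (c ^ 2 * Δt)) • ∑ j ∈ Finset.Icc (i - k) i, a (i - j) • φ j))
      = -((1 / (c ^ 2 * Δt)) • ∑ i ∈ Finset.Icc (n - k) n, a (n - i) •
        ∑ j ∈ Finset.Icc (i - k) i, a (i - j) • φ j) := by
    rw [smul_sum, ← Finset.sum_neg_distrib]
    refine Finset.sum_congr rfl fun i _ => ?_
    rw [smul_comm, smul_neg]
  rw [this, smul_neg, smul_smul]
  have hfac : (1 / Δt) * (1 / (c ^ 2 * Δt)) = 1 / (c ^ 2 * Δt ^ 2) := by
    field_simp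
  rw [hfac]
  abel
end

section
/- Semi-discrete Gauss's law for the fully implicit CDF-2 scheme: assume the wave equation (φ^{n+3/2} - 2φ^{n+1/2} + φ^{n-1/2})/(c²Δt²) - Δ((φ^{n+3/2}+φ^{n-1/2})/2) = (ρ^{n+3/2}+ρ^{n-1/2})/(2ε₀) and the gauge condition (φ^{k+1/2} - φ^{k-1/2})/(c²Δt) + div A^k = 0 for k = n and k = n+1. Define E^{n+1/2} = -∇((φ^{n+3/2}+φ^{n-1/2})/2) - (A^{n+1}-A^n)/Δt. Then div E^{n+1/2} = (ρ^{n+3/2} + ρ^{n-1/2})/(2ε₀). -/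
/-- Semi-discrete Gauss's law for the fully implicit CDF-2 scheme. Here `p3`, `p1`,
`pm1` denote `φ^{n+3/2}`, `φ^{n+1/2}`, `φ^{n-1/2}`; `r3`, `rm1` denote
`ρ^{n+3/2}`, `ρ^{n-1/2}`; `An1`, `An` denote `A^{n+1}`, `A^n`. -/
theorem cdf2_implicit_gauss_law
    {S V : Type*} [AddCommGroup S] [Module ℝ S] [AddCommGroup V] [Module ℝ V]
    (grad : S →ₗ[ℝ] V) (dvg : V →ₗ[ℝ] S) (lap : S →ₗ[ℝ] S)
    (hdivgrad : ∀ ψ : S, dvg (grad ψ) = lap ψ)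
    (c Δt ε₀ : ℝ) (hc : 0 < c) (hΔt : 0 < Δt) (hε₀ : 0 < ε₀)
    (p3 p1 pm1 r3 rm1 : S) (An1 An : V) (E : V)
    (hwave : (1 / (c ^ 2 * Δt ^ 2)) • (p3 - (2 : ℝ) • p1 + pm1)
        - lap (((1 : ℝ) / 2) • (p3 + pm1)) = (1 / (2 * ε₀)) • (r3 + rm1))
    (hgauge_n1 : (1 / (c ^ 2 * Δt)) • (p3 - p1) + dvg An1 = 0)
    (hgauge_n : (1 / (c ^ 2 * Δt)) • (p1 - pm1) + dvg An = 0)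
    (hE : E = -grad (((1 : ℝ) / 2) • (p3 + pm1)) - (1 / Δt) • (An1 - An)) :
    dvg E = (1 / (2 * ε₀)) • (r3 + rm1) := by
  have h1 : dvg An1 = -(1 / (c ^ 2 * Δt)) • (p3 - p1) := by
    rw [neg_smul, eq_neg_iff_add_eq_zero, add_comm]; exact hgauge_n1
  have h2 : dvg An = -(1 / (c ^ 2 * Δt)) • (p1 - pm1) := by
    rw [neg_smul, eq_neg_iff_add_eq_zero, add_comm]; exact hgauge_n
  have key : (1 / Δt) * (1 / (c ^ 2 * Δt)) = 1 / (c ^ 2 * Δt ^ 2) := by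
    field_simp
  simp only [hE, map_sub, map_neg, hdivgrad, map_smul, h1, h2, ← hwave, smul_sub,
    smul_neg, sub_neg_eq_add, smul_smul, key]
  module
end
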